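/- Let f : [0, ∞) → ℝ^{L_R*} be a solution of the discrete near-resonance acoustic kinetic system with broadening Λ ≥ 0. Then the total momentum ∑_{p∈L_R*} p·f_p(t) ∈ ℝ³ is constant in t. -/

import Mathlib

open scoped BigOperators Classical

/-- Euclidean norm of a point of the integer lattice `ℤ³`. -/
noncomputable def enorm3 (p : Fin 3 → ℤ) : ℝ := Real.sqrt (∑ i, ((p i : ℝ))^2)

/-- The truncated lattice `L_R* = {p ∈ ℤ³ : 0 < |p| < R}` (as a finite set). -/
noncomputable def latticeBall (R : ℝ) : Finset (Fin 3 → ℤ) :=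
  (Finset.Icc (fun _ => (-⌈R⌉ : ℤ)) (fun _ => (⌈R⌉ : ℤ))).filter
    (fun p => 0 < enorm3 p ∧ enorm3 p < R)

/-- Right-hand side of the discrete exact-resonance acoustic wave kinetic system, with
kernel `V_{p₁,p₂,p₃} = |p₁||p₂||p₃|` and phonon dispersion `ω(p) = |p|`. -/
noncomputable def Qres (R : ℝ) (f : (Fin 3 → ℤ) → ℝ) (p1 : Fin 3 → ℤ) : ℝ :=
  (∑ p2 ∈ latticeBall R, ∑ p3 ∈ latticeBall R,
      if p1 = p2 + p3 ∧ enorm3 p1 = enorm3 p2 + enorm3 p3 then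
        enorm3 p1 * enorm3 p2 * enorm3 p3 *
          (f p2 * f p3 - f p1 * (f p2 + f p3)) else 0)
  - 2 * ∑ p2 ∈ latticeBall R, ∑ p3 ∈ latticeBall R,
      if p3 = p1 + p2 ∧ enorm3 p3 = enorm3 p1 + enorm3 p2 then
        enorm3 p1 * enorm3 p2 * enorm3 p3 *
          (f p1 * f p2 - f p3 * (f p1 + f p2)) else 0

/-- Right-hand side of the discrete near-resonance acoustic wave kinetic system with
resonance broadening `Λ`. -/
noncomputable def QNR (R Λ : ℝ) (f : (Fin 3 → ℤ) → ℝ) (p1 : Fin 3 → ℤ) : ℝ :=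
  (∑ p2 ∈ latticeBall R, ∑ p3 ∈ latticeBall R,
      if p1 = p2 + p3 ∧ |enorm3 p1 - enorm3 p2 - enorm3 p3| ≤ Λ then
        enorm3 p1 * enorm3 p2 * enorm3 p3 *
          (f p2 * f p3 - f p1 * (f p2 + f p3)) else 0)
  - 2 * ∑ p2 ∈ latticeBall R, ∑ p3 ∈ latticeBall R,
      if p3 = p1 + p2 ∧ |enorm3 p3 - enorm3 p1 - enorm3 p2| ≤ Λ then
        enorm3 p1 * enorm3 p2 * enorm3 p3 *
          (f p1 * f p2 - f p3 * (f p1 + f p2)) else 0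

section Aux

variable {R Λ : ℝ}

/-- Rotation of a triple sum over the same finite set. -/
lemma sum_rot {α : Type*} (S : Finset α) (F : α → α → α → ℝ) :
    ∑ a ∈ S, ∑ b ∈ S, ∑ c ∈ S, F a b c = ∑ a ∈ S, ∑ b ∈ S, ∑ c ∈ S, F c a b := by
  rw [Finset.sum_comm]
  refine Finset.sum_congr rfl fun b _ => ?_
  rw [Finset.sum_comm]

noncomputable def gker (Λ : ℝ) (f : (Fin 3 → ℤ) → ℝ) (a b c : Fin 3 → ℤ) : ℝ :=
  if a = b + c ∧ |enorm3 a - enorm3 b - enorm3 c| ≤ Λ then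
    enorm3 a * enorm3 b * enorm3 c * (f b * f c - f a * (f b + f c)) else 0

lemma gker_symm (Λ : ℝ) (f : (Fin 3 → ℤ) → ℝ) (a b c : Fin 3 → ℤ) :
    gker Λ f a b c = gker Λ f a c b := by
  unfold gker
  have h1 : (a = b + c) ↔ (a = c + b) := by rw [add_comm]
  have h2 : |enorm3 a - enorm3 b - enorm3 c| = |enorm3 a - enorm3 c - enorm3 b| := by
    ring_nf
  exact if_congr (and_congr h1 (by rw [h2])) (by ring) rfl

lemma gker_vanish (Λ : ℝ) (f : (Fin 3 → ℤ) → ℝ) (a b c : Fin 3 → ℤ) (i : Fin 3) :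
    ((a i : ℝ) - (b i : ℝ) - (c i : ℝ)) * gker Λ f a b c = 0 := by
  unfold gker
  split_ifs with h
  · have : a i = b i + c i := by rw [h.1]; rfl
    rw [this]; push_cast; ring
  · ring

lemma QNR_eq_gker (R Λ : ℝ) (f : (Fin 3 → ℤ) → ℝ) (p1 : Fin 3 → ℤ) :
    QNR R Λ f p1 =
      (∑ p2 ∈ latticeBall R, ∑ p3 ∈ latticeBall R, gker Λ f p1 p2 p3)
      - 2 * ∑ p2 ∈ latticeBall R, ∑ p3 ∈ latticeBall R, gker Λ f p3 p1 p2 := by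
  unfold QNR gker
  have h : ∀ p2 p3 : Fin 3 → ℤ,
      (if p3 = p1 + p2 ∧ |enorm3 p3 - enorm3 p1 - enorm3 p2| ≤ Λ then
        enorm3 p1 * enorm3 p2 * enorm3 p3 * (f p1 * f p2 - f p3 * (f p1 + f p2)) else 0)
      = (if p3 = p1 + p2 ∧ |enorm3 p3 - enorm3 p1 - enorm3 p2| ≤ Λ then
        enorm3 p3 * enorm3 p1 * enorm3 p2 * (f p1 * f p2 - f p3 * (f p1 + f p2)) else 0) :=
    fun p2 p3 => if_congr Iff.rfl (by ring) rfl
  simp only [h]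

lemma key_sum (R Λ : ℝ) (f : (Fin 3 → ℤ) → ℝ) (i : Fin 3) :
    ∑ p ∈ latticeBall R, (p i : ℝ) * QNR R Λ f p = 0 := by
  set S := latticeBall R with hS
  have e1 : ∀ (c : ℝ) (F : (Fin 3 → ℤ) → (Fin 3 → ℤ) → ℝ),
      c * (∑ b ∈ S, ∑ d ∈ S, F b d) = ∑ b ∈ S, ∑ d ∈ S, c * F b d := by
    intro c F
    rw [Finset.mul_sum]
    exact Finset.sum_congr rfl fun b _ => by rw [Finset.mul_sum]
  have hrw : ∀ p ∈ S, (p i : ℝ) * QNR R Λ f p =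
      (∑ b ∈ S, ∑ c ∈ S, (p i : ℝ) * gker Λ f p b c)
      - ∑ b ∈ S, ∑ c ∈ S, (2 * ((p i : ℝ) * gker Λ f c p b)) := by
    intro p _
    rw [QNR_eq_gker, ← hS, mul_sub, mul_left_comm (_ : ℝ) 2, e1, e1, e1]
  rw [Finset.sum_congr rfl hrw, Finset.sum_sub_distrib]
  have hrot := sum_rot S (fun p b c => 2 * ((p i : ℝ) * gker Λ f c p b))
  beta_reduce at hrot
  have hrot2 := sum_rot S (fun a b c => 2 * ((c i : ℝ) * gker Λ f b c a))
  beta_reduce at hrot2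
  rw [hrot, hrot2]
  have hswap : ∑ a ∈ S, ∑ b ∈ S, ∑ c ∈ S, ((b i : ℝ) * gker Λ f a b c) =
      ∑ a ∈ S, ∑ b ∈ S, ∑ c ∈ S, ((c i : ℝ) * gker Λ f a b c) := by
    refine Finset.sum_congr rfl fun a _ => ?_
    rw [Finset.sum_comm]
    exact Finset.sum_congr rfl fun b _ => Finset.sum_congr rfl fun c _ => by
      rw [gker_symm]
  have h2T : ∑ a ∈ S, ∑ b ∈ S, ∑ c ∈ S, (2 * ((b i : ℝ) * gker Λ f a b c)) =
      ∑ a ∈ S, ∑ b ∈ S, ∑ c ∈ S,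
        ((b i : ℝ) * gker Λ f a b c + (c i : ℝ) * gker Λ f a b c) := by
    simp only [two_mul, Finset.sum_add_distrib]
    rw [hswap]
  rw [h2T, sub_eq_zero]
  refine Finset.sum_congr rfl fun a _ => Finset.sum_congr rfl fun b _ =>
    Finset.sum_congr rfl fun c _ => ?_
  have h := gker_vanish Λ f a b c i
  linear_combination h

end Aux

/-- Conservation of momentum for the discrete near-resonance acoustic kinetic system:
the vector `∑_{p ∈ L_R*} p·f_p(t) ∈ ℝ³` is constant along every solution. -/
theorem momentum_conservation_near_resonance (R Λ : ℝ) (hR : 0 < R) (hΛ : 0 ≤ Λ)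
    (f : ℝ → (Fin 3 → ℤ) → ℝ)
    (hsol : ∀ p ∈ latticeBall R, ∀ t : ℝ, 0 ≤ t →
      HasDerivAt (fun s => f s p) (QNR R Λ (f t) p) t) :
    ∀ t : ℝ, 0 ≤ t → ∀ i : Fin 3,
      ∑ p ∈ latticeBall R, (p i : ℝ) * f t p = ∑ p ∈ latticeBall R, (p i : ℝ) * f 0 p := by
  intro t ht i
  have hF : ∀ s : ℝ, 0 ≤ s →
      HasDerivAt (fun u => ∑ p ∈ latticeBall R, (p i : ℝ) * f u p) 0 s := by
    intro s hs
    have h : HasDerivAt (fun u => ∑ p ∈ latticeBall R, (p i : ℝ) * f u p)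
        (∑ p ∈ latticeBall R, (p i : ℝ) * QNR R Λ (f s) p) s :=
      HasDerivAt.fun_sum (fun p hp => (hsol p hp s hs).const_mul ((p i : ℝ)))
    rwa [key_sum R Λ (f s) i] at h
  have := constant_of_has_deriv_right_zero
    (f := fun u => ∑ p ∈ latticeBall R, (p i : ℝ) * f u p) (a := 0) (b := t)
    (fun x hx => (hF x hx.1).continuousAt.continuousWithinAt)
    (fun x hx => (hF x hx.1).hasDerivWithinAt)
  exact this t (Set.right_mem_Icc.2 ht)
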